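/- arXiv:1105.4716 — 2 statements merged into one kernel-verified Lean document; each statement's English description precedes it below -/
import Mathlib

section
/- Let H be a complex Hilbert space, let Θ be a bounded, self-adjoint, positive, invertible operator on H, and let Ĥ be a bounded operator on H satisfying Θ Ĥ = Ĥ† Θ. Then the physical norm is preserved by the Schrödinger evolution: for every Ψ ∈ H and every real t, ⟨exp(−i t Ĥ)Ψ, Θ exp(−i t Ĥ)Ψ⟩ = ⟨Ψ, ΘΨ⟩. -/
open scoped InnerProductSpace

/-- If `Θ` is a bounded, self-adjoint, positive, invertible metric operator and
`Ĥ` is quasi-Hermitian with respect to `Θ`, then the physical squared norm `⟪Ψ, Θ Ψ⟫` is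
preserved by the Schrödinger evolution `exp(-i t Ĥ)`. -/
theorem physical_norm_preserved
    {H : Type*} [NormedAddCommGroup H] [InnerProductSpace ℂ H] [CompleteSpace H]
    (Θ : H →L[ℂ] H) (hsa : IsSelfAdjoint Θ) (hpos : Θ.IsPositive) (hinv : IsUnit Θ)
    (Hhat : H →L[ℂ] H)
    (hqh : Θ.comp Hhat = (ContinuousLinearMap.adjoint Hhat).comp Θ)
    (Ψ : H) (t : ℝ) :
    ⟪NormedSpace.exp ((-(Complex.I * (t : ℂ))) • Hhat) Ψ,
        Θ (NormedSpace.exp ((-(Complex.I * (t : ℂ))) • Hhat) Ψ)⟫_ℂ = ⟪Ψ, Θ Ψ⟫_ℂ := by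
  letI : NormedAlgebra ℚ (H →L[ℂ] H) := NormedAlgebra.restrictScalars ℚ ℂ (H →L[ℂ] H)
  set c : ℂ := Complex.I * (t : ℂ) with hc
  set B : H →L[ℂ] H := c • Hhat with hB
  have hA : (-(Complex.I * (t : ℂ))) • Hhat = -B := by rw [hB, neg_smul]
  set u : (H →L[ℂ] H)ˣ := hinv.unit with hu
  have huv : (u : H →L[ℂ] H) = Θ := hinv.unit_spec
  -- quasi-Hermiticity as multiplication
  have hmul : Θ * Hhat = ContinuousLinearMap.adjoint Hhat * Θ := hqh
  have hconj : ContinuousLinearMap.adjoint Hhat = ↑u * Hhat * ↑u⁻¹ := by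
    have := congrArg (· * (↑u⁻¹ : H →L[ℂ] H)) hmul
    simp only [mul_assoc, huv] at this ⊢
    have hΘinv : Θ * (↑u⁻¹ : H →L[ℂ] H) = 1 := by rw [← huv]; exact u.mul_inv
    rw [hΘinv, mul_one] at this
    exact this.symm
  have hBadj : c • ContinuousLinearMap.adjoint Hhat = ↑u * B * ↑u⁻¹ := by
    rw [hconj, hB]
    rw [mul_smul_comm, smul_mul_assoc]
  have hexpconj : NormedSpace.exp (c • ContinuousLinearMap.adjoint Hhat)
      = ↑u * NormedSpace.exp B * ↑u⁻¹ := by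
    rw [hBadj]; exact NormedSpace.exp_units_conj u B
  -- adjoint of exp(-B)
  have hstar : ContinuousLinearMap.adjoint (NormedSpace.exp (-B))
      = NormedSpace.exp (c • ContinuousLinearMap.adjoint Hhat) := by
    have h1 : star (NormedSpace.exp (-B)) = NormedSpace.exp (star (-B)) :=
      NormedSpace.star_exp (-B)
    have h2 : star (-B) = c • ContinuousLinearMap.adjoint Hhat := by
      rw [hB, star_neg, star_smul]
      have : star Hhat = ContinuousLinearMap.adjoint Hhat := rfl
      rw [this]
      have hcs : star c = -c := by
        simp [hc, Complex.ext_iff]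
      rw [hcs, neg_smul, neg_neg]
    rw [← h2, ← h1]; rfl
  -- key identity
  have key : ContinuousLinearMap.adjoint (NormedSpace.exp (-B)) * Θ * NormedSpace.exp (-B)
      = Θ := by
    rw [hstar, hexpconj]
    have hinvΘ : (↑u⁻¹ : H →L[ℂ] H) * Θ = 1 := by rw [← huv]; exact u.inv_mul
    have hee : NormedSpace.exp B * NormedSpace.exp (-B) = 1 := by
      rw [← NormedSpace.exp_add_of_commute (Commute.refl B).neg_right, add_neg_cancel,
        NormedSpace.exp_zero]
    calc ↑u * NormedSpace.exp B * ↑u⁻¹ * Θ * NormedSpace.exp (-B)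
        = ↑u * (NormedSpace.exp B * ((↑u⁻¹ * Θ) * NormedSpace.exp (-B))) := by
          simp [mul_assoc]
      _ = Θ := by rw [hinvΘ, one_mul, hee, mul_one, huv]
  rw [hA]
  have := congrArg (fun T : H →L[ℂ] H => ⟪Ψ, T Ψ⟫_ℂ) key
  simp only [ContinuousLinearMap.mul_apply] at this
  rw [← this, ContinuousLinearMap.adjoint_inner_right]
end

section
/- Let H be a complex Hilbert space, let Θ be a bounded, self-adjoint, positive, invertible operator on H, and let Ĥ be a bounded operator on H satisfying Θ Ĥ = Ĥ† Θ. Then for every real t the evolution operator exp(−i t Ĥ) preserves the physical inner product: ⟨exp(−i t Ĥ)φ, Θ exp(−i t Ĥ)ψ⟩ = ⟨φ, Θψ⟩ for all φ, ψ ∈ H; that is, the Schrödinger time evolution is unitary with respect to the Θ-modified inner product. -/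
open scoped InnerProductSpace

/-- If `Θ` is a bounded, self-adjoint, positive, invertible metric operator and
`Ĥ` is quasi-Hermitian with respect to `Θ`, then the Schrödinger evolution `exp(-i t Ĥ)`
preserves the physical inner product `⟪φ, Θ ψ⟫`. -/
theorem evolution_unitary_wrt_metric_inner
    {H : Type*} [NormedAddCommGroup H] [InnerProductSpace ℂ H] [CompleteSpace H]
    (Θ : H →L[ℂ] H) (hsa : IsSelfAdjoint Θ) (hpos : Θ.IsPositive) (hinv : IsUnit Θ)
    (Hhat : H →L[ℂ] H)
    (hqh : Θ.comp Hhat = (ContinuousLinearMap.adjoint Hhat).comp Θ)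
    (t : ℝ) (φ ψ : H) :
    ⟪NormedSpace.exp ((-(Complex.I * (t : ℂ))) • Hhat) φ,
        Θ (NormedSpace.exp ((-(Complex.I * (t : ℂ))) • Hhat) ψ)⟫_ℂ = ⟪φ, Θ ψ⟫_ℂ := by
  obtain ⟨u, hu⟩ := hinv
  set A : H →L[ℂ] H := (-(Complex.I * (t : ℂ))) • Hhat with hA
  have hmul : Θ * Hhat = ContinuousLinearMap.adjoint Hhat * Θ := hqh
  have hconj : ContinuousLinearMap.adjoint Hhat = ↑u * Hhat * ↑u⁻¹ := by
    have h1 : (↑u : H →L[ℂ] H) * Hhat = ContinuousLinearMap.adjoint Hhat * ↑u := by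
      rw [hu]; exact hmul
    calc ContinuousLinearMap.adjoint Hhat
        = ContinuousLinearMap.adjoint Hhat * (↑u * ↑u⁻¹) := by
          rw [u.mul_inv, mul_one]
      _ = (ContinuousLinearMap.adjoint Hhat * ↑u) * ↑u⁻¹ := by rw [mul_assoc]
      _ = ↑u * Hhat * ↑u⁻¹ := by rw [← h1]
  have hstarA : star A = -(↑u * A * ↑u⁻¹) := by
    rw [hA, star_smul, ContinuousLinearMap.star_eq_adjoint, hconj]
    have hs : star (-(Complex.I * (t : ℂ))) = Complex.I * (t : ℂ) := by
      simp [Complex.ext_iff]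
    rw [hs]
    rw [mul_smul_comm, smul_mul_assoc, ← neg_smul]
    ring_nf
  have key : ContinuousLinearMap.adjoint (NormedSpace.exp A) * Θ * NormedSpace.exp A = Θ := by
    rw [← ContinuousLinearMap.star_eq_adjoint, NormedSpace.star_exp, hstarA, ← hu]
    let +nondep : NormedAlgebra ℚ (H →L[ℂ] H) := .restrictScalars ℚ ℂ (H →L[ℂ] H)
    have hexp : NormedSpace.exp (-(↑u * A * ↑u⁻¹)) = ↑u * NormedSpace.exp (-A) * ↑u⁻¹ := by
      have h : -((↑u : H →L[ℂ] H) * A * ↑u⁻¹) = ↑u * (-A) * ↑u⁻¹ := by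
        noncomm_ring
      rw [h, NormedSpace.exp_units_conj]
    rw [hexp]
    have h2 : NormedSpace.exp (-A) * NormedSpace.exp A = 1 := by
      rw [← NormedSpace.exp_add_of_commute ((Commute.refl A).neg_left)]
      simp
    calc (↑u : H →L[ℂ] H) * NormedSpace.exp (-A) * ↑u⁻¹ * ↑u * NormedSpace.exp A
        = ↑u * (NormedSpace.exp (-A) * ((↑u⁻¹ * ↑u) * NormedSpace.exp A)) := by
          simp [mul_assoc]
      _ = ↑u := by rw [u.inv_mul, one_mul, h2, mul_one]
  have happ : ContinuousLinearMap.adjoint (NormedSpace.exp A)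
      (Θ (NormedSpace.exp A ψ)) = Θ ψ := by
    have := congrFun (congrArg DFunLike.coe key) ψ
    simpa [ContinuousLinearMap.mul_apply] using this
  rw [← ContinuousLinearMap.adjoint_inner_right, happ]
end
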